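/- Let H be a real inner product space, F : H → ℝ convex and differentiable with gradient ∇F. Let z₁,…,zₙ ∈ H, q₁,…,qₙ ≥ 0 with Qₙ = Σᵢ qᵢ > 0, and suppose m, M ∈ H satisfy ‖∇F(zᵢ) - (m+M)/2‖ ≤ (1/2)‖M - m‖ for all i. Then 0 ≤ (1/Qₙ)Σᵢ qᵢ F(zᵢ) - F((1/Qₙ)Σᵢ qᵢzᵢ) ≤ (1/2)‖M - m‖ · (1/Qₙ)Σᵢ qᵢ‖zᵢ - (1/Qₙ)Σⱼ qⱼzⱼ‖ ≤ (1/2)‖M - m‖ [(1/Qₙ)Σᵢ qᵢ‖zᵢ‖² - ‖(1/Qₙ)Σᵢ qᵢzᵢ‖²]^{1/2}. -/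

import Mathlib

open scoped RealInnerProductSpace

theorem stmt17 {H : Type*} [NormedAddCommGroup H] [InnerProductSpace ℝ H]
    (F : H → ℝ) (G : H → H) (hconv : ConvexOn ℝ Set.univ F)
    (hgrad : ∀ x y : H, ⟪G y, x - y⟫ ≤ F x - F y)
    (n : ℕ) (z : Fin n → H) (q : Fin n → ℝ) (hq : ∀ i, 0 ≤ q i)
    (Q : ℝ) (hQ : Q = ∑ i, q i) (hQpos : 0 < Q) (m M : H)
    (hm : ∀ i, ‖G (z i) - ((2 : ℝ)⁻¹) • (m + M)‖ ≤ ‖M - m‖ / 2) :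
    0 ≤ (1 / Q) * ∑ i, q i * F (z i) - F ((1 / Q) • ∑ i, q i • z i) ∧
      (1 / Q) * ∑ i, q i * F (z i) - F ((1 / Q) • ∑ i, q i • z i) ≤
        (1 / 2) * ‖M - m‖ *
          ((1 / Q) * ∑ i, q i * ‖z i - (1 / Q) • ∑ j, q j • z j‖) ∧
      (1 / 2) * ‖M - m‖ *
          ((1 / Q) * ∑ i, q i * ‖z i - (1 / Q) • ∑ j, q j • z j‖) ≤
        (1 / 2) * ‖M - m‖ *
          Real.sqrt ((1 / Q) * ∑ i, q i * ‖z i‖ ^ 2 -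
            ‖(1 / Q) • ∑ i, q i • z i‖ ^ 2) := by
  have hQ0 : Q ≠ 0 := ne_of_gt hQpos
  set σ : H := (1 / Q) • ∑ i, q i • z i with hσdef
  have hQσ : Q • σ = ∑ i, q i • z i := by
    rw [hσdef, smul_smul]; field_simp; rw [one_smul]
  have hsum0 : ∑ i, q i • (z i - σ) = 0 := by
    have h : ∑ i, q i • (z i - σ) = (∑ i, q i • z i) - (∑ i, q i) • σ := by
      simp [smul_sub, Finset.sum_sub_distrib, Finset.sum_smul]
    rw [h, ← hQ, hQσ, sub_self]
  have hinner0 : ∀ c : H, ∑ i, q i * ⟪c, z i - σ⟫ = 0 := by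
    intro c
    have h : ∑ i, q i * ⟪c, z i - σ⟫ = ⟪c, ∑ i, q i • (z i - σ)⟫ := by
      rw [inner_sum]
      exact Finset.sum_congr rfl fun i _ => (real_inner_smul_right _ _ _).symm
    rw [h, hsum0, inner_zero_right]
  have hkey : (1 / Q) * ∑ i, q i * F (z i) - F σ
      = (1 / Q) * ∑ i, q i * (F (z i) - F σ) := by
    have h : ∑ i, q i * (F (z i) - F σ) = (∑ i, q i * F (z i)) - (∑ i, q i) * F σ := by
      simp [mul_sub, Finset.sum_sub_distrib, Finset.sum_mul]
    rw [h, ← hQ]; field_simp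
  -- Part 1
  have part1 : 0 ≤ (1 / Q) * ∑ i, q i * F (z i) - F σ := by
    rw [hkey]
    have h1 : ∑ i, q i * ⟪G σ, z i - σ⟫ ≤ ∑ i, q i * (F (z i) - F σ) :=
      Finset.sum_le_sum fun i _ => mul_le_mul_of_nonneg_left (hgrad _ _) (hq i)
    rw [hinner0] at h1
    positivity
  -- Part 2
  set c : H := ((2 : ℝ)⁻¹) • (m + M) with hc
  have part2 : (1 / Q) * ∑ i, q i * F (z i) - F σ ≤
      (1 / 2) * ‖M - m‖ * ((1 / Q) * ∑ i, q i * ‖z i - σ‖) := by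
    rw [hkey]
    have h2 : ∀ i, F (z i) - F σ ≤ ⟪G (z i) - c, z i - σ⟫ + ⟪c, z i - σ⟫ := by
      intro i
      have := hgrad σ (z i)
      have h := inner_sub_left (𝕜 := ℝ) (G (z i)) c (z i - σ)
      have h2 : ⟪G (z i), σ - z i⟫ = -⟪G (z i), z i - σ⟫ := by
        rw [← inner_neg_right]; congr 1; abel
      rw [h]
      linarith
    have h3 : ∀ i, ⟪G (z i) - c, z i - σ⟫ ≤ ‖M - m‖ / 2 * ‖z i - σ‖ := fun i =>
      le_trans (real_inner_le_norm _ _) (mul_le_mul_of_nonneg_right (hm i) (norm_nonneg _))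
    have h4 : ∑ i, q i * (F (z i) - F σ) ≤
        ∑ i, q i * (‖M - m‖ / 2 * ‖z i - σ‖) + ∑ i, q i * ⟪c, z i - σ⟫ := by
      rw [← Finset.sum_add_distrib]
      refine Finset.sum_le_sum fun i _ => ?_
      rw [← mul_add]
      exact mul_le_mul_of_nonneg_left (le_trans (h2 i) (by linarith [h3 i])) (hq i)
    rw [hinner0, add_zero] at h4
    have h5 : ∑ i, q i * (‖M - m‖ / 2 * ‖z i - σ‖)
        = ‖M - m‖ / 2 * ∑ i, q i * ‖z i - σ‖ := by
      rw [Finset.mul_sum]; exact Finset.sum_congr rfl fun i _ => by ring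
    rw [h5] at h4
    have hQinv : (0:ℝ) ≤ 1 / Q := by positivity
    calc (1 / Q) * ∑ i, q i * (F (z i) - F σ)
        ≤ (1 / Q) * (‖M - m‖ / 2 * ∑ i, q i * ‖z i - σ‖) :=
          mul_le_mul_of_nonneg_left h4 hQinv
      _ = (1 / 2) * ‖M - m‖ * ((1 / Q) * ∑ i, q i * ‖z i - σ‖) := by ring
  -- Part 3
  have part3 : (1 / 2) * ‖M - m‖ * ((1 / Q) * ∑ i, q i * ‖z i - σ‖) ≤
      (1 / 2) * ‖M - m‖ *
        Real.sqrt ((1 / Q) * ∑ i, q i * ‖z i‖ ^ 2 - ‖σ‖ ^ 2) := by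
    refine mul_le_mul_of_nonneg_left ?_ (by positivity)
    -- Cauchy–Schwarz
    have hcs : (∑ i, q i * ‖z i - σ‖) ^ 2 ≤
        (∑ i, q i) * ∑ i, q i * ‖z i - σ‖ ^ 2 := by
      have h := Finset.sum_mul_sq_le_sq_mul_sq Finset.univ
        (fun i => Real.sqrt (q i)) (fun i => Real.sqrt (q i) * ‖z i - σ‖)
      have e1 : ∀ i, Real.sqrt (q i) * (Real.sqrt (q i) * ‖z i - σ‖)
          = q i * ‖z i - σ‖ := fun i => by
        rw [← mul_assoc, Real.mul_self_sqrt (hq i)]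
      have e2 : ∀ i, Real.sqrt (q i) ^ 2 = q i := fun i => Real.sq_sqrt (hq i)
      have e3 : ∀ i, (Real.sqrt (q i) * ‖z i - σ‖) ^ 2 = q i * ‖z i - σ‖ ^ 2 := fun i => by
        rw [mul_pow, e2]
      simpa only [e1, e2, e3] using h
    -- variance identity
    have hvar : ∑ i, q i * ‖z i - σ‖ ^ 2 = (∑ i, q i * ‖z i‖ ^ 2) - Q * ‖σ‖ ^ 2 := by
      have h1 : ∀ i, ‖z i - σ‖ ^ 2 = ‖z i‖ ^ 2 - 2 * ⟪z i, σ⟫ + ‖σ‖ ^ 2 := fun i => by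
        rw [norm_sub_sq_real]
      have h2 : ∑ i, q i * ⟪z i, σ⟫ = Q * ‖σ‖ ^ 2 := by
        have h : ∑ i, q i * ⟪z i, σ⟫ = ⟪∑ i, q i • z i, σ⟫ := by
          rw [sum_inner]
          exact Finset.sum_congr rfl fun i _ => (real_inner_smul_left _ _ _).symm
        rw [h, ← hQσ, real_inner_smul_left, real_inner_self_eq_norm_sq]
      calc ∑ i, q i * ‖z i - σ‖ ^ 2
          = ∑ i, (q i * ‖z i‖ ^ 2 - 2 * (q i * ⟪z i, σ⟫) + q i * ‖σ‖ ^ 2) := by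
            exact Finset.sum_congr rfl fun i _ => by rw [h1 i]; ring
        _ = (∑ i, q i * ‖z i‖ ^ 2) - 2 * (∑ i, q i * ⟪z i, σ⟫)
              + (∑ i, q i) * ‖σ‖ ^ 2 := by
            rw [Finset.sum_add_distrib, Finset.sum_sub_distrib, ← Finset.mul_sum,
              ← Finset.sum_mul]
        _ = (∑ i, q i * ‖z i‖ ^ 2) - Q * ‖σ‖ ^ 2 := by rw [h2, ← hQ]; ring
    have hA : (0:ℝ) ≤ (1 / Q) * ∑ i, q i * ‖z i - σ‖ :=
      mul_nonneg (by positivity) (Finset.sum_nonneg fun i _ => mul_nonneg (hq i) (norm_nonneg _))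
    have hV : (0:ℝ) ≤ (1 / Q) * ∑ i, q i * ‖z i‖ ^ 2 - ‖σ‖ ^ 2 := by
      have hB : (0:ℝ) ≤ ∑ i, q i * ‖z i - σ‖ ^ 2 :=
        Finset.sum_nonneg fun i _ => mul_nonneg (hq i) (by positivity)
      have : (1 / Q) * ∑ i, q i * ‖z i‖ ^ 2 - ‖σ‖ ^ 2
          = (1 / Q) * ∑ i, q i * ‖z i - σ‖ ^ 2 := by rw [hvar]; field_simp
      rw [this]; positivity
    rw [Real.le_sqrt hA hV]
    have : ((1 / Q) * ∑ i, q i * ‖z i - σ‖) ^ 2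
        = (1 / Q^2) * (∑ i, q i * ‖z i - σ‖) ^ 2 := by ring
    rw [this]
    rw [← hQ] at hcs
    have hstep : (1 / Q^2) * (∑ i, q i * ‖z i - σ‖) ^ 2
        ≤ (1 / Q^2) * (Q * ∑ i, q i * ‖z i - σ‖ ^ 2) :=
      mul_le_mul_of_nonneg_left hcs (by positivity)
    calc (1 / Q^2) * (∑ i, q i * ‖z i - σ‖) ^ 2
        ≤ (1 / Q^2) * (Q * ∑ i, q i * ‖z i - σ‖ ^ 2) := hstep
      _ = (1 / Q) * ∑ i, q i * ‖z i - σ‖ ^ 2 := by field_simp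
      _ = (1 / Q) * ∑ i, q i * ‖z i‖ ^ 2 - ‖σ‖ ^ 2 := by
          rw [hvar]; field_simp
  exact ⟨part1, part2, part3⟩
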